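/- For all real x* > 0 and x > 2, with f(x*, x) = x*·(x/x* − ln(x/x*) − 1), one has f(x*, x−1) − f(x*, x) ≤ −(1 − x*/x − x*/(x(x−1))). -/

import Mathlib

noncomputable def f (xs x : ℝ) : ℝ := xs * (x / xs - Real.log (x / xs) - 1)

theorem stmt_1 (xs x : ℝ) (hxs : 0 < xs) (hx : 2 < x) :
    f xs (x - 1) - f xs x ≤ -(1 - xs / x - xs / (x * (x - 1))) := by
  have hx0 : (0:ℝ) < x := by linarith
  have hx1 : (0:ℝ) < x - 1 := by linarith
  have hxsne : xs ≠ 0 := ne_of_gt hxs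
  have hlog1 : Real.log ((x - 1) / xs) = Real.log (x - 1) - Real.log xs :=
    Real.log_div (ne_of_gt hx1) hxsne
  have hlog2 : Real.log (x / xs) = Real.log x - Real.log xs :=
    Real.log_div (ne_of_gt hx0) hxsne
  have key : f xs (x - 1) - f xs x = -1 + xs * Real.log (x / (x - 1)) := by
    rw [f, f, hlog1, hlog2, Real.log_div (ne_of_gt hx0) (ne_of_gt hx1)]
    field_simp
    ring
  have hbound : Real.log (x / (x - 1)) ≤ x / (x - 1) - 1 :=
    Real.log_le_sub_one_of_pos (by positivity)
  have h2 : x / (x - 1) - 1 = 1 / x + 1 / (x * (x - 1)) := by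
    field_simp
    ring
  rw [key]
  have : xs * Real.log (x / (x - 1)) ≤ xs * (1 / x + 1 / (x * (x - 1))) := by
    apply mul_le_mul_of_nonneg_left _ (le_of_lt hxs)
    rw [← h2]; exact hbound
  have heq : xs * (1 / x + 1 / (x * (x - 1))) = xs / x + xs / (x * (x - 1)) := by
    field_simp
  linarith [this, heq ▸ this]
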